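/- Let a and c be positive integers with gcd(a, c) = 1. There exist constants C₁ > 0 and C > 0 (depending only on a and c) such that for all sufficiently large n and every coloring f : [n] → {−1, 1}: if the set R' = {x ∈ [n] : c divides x and f(x) = 1} of red multiples of c satisfies |R'| ≤ C₁·n, then there are at least C·n² solutions (x, y, z) ∈ [n]³ to a·x + a·y = c·z with f(x) = f(y) = f(z) = −1 (entirely blue solutions). -/

import Mathlib

open Finset

/-- Entirely blue solutions `(x, y, z) ∈ [n]³` to `a·x + a·y = c·z` under the
coloring `f` (blue is the color `false`, i.e. `−1`). -/
def blueSolns (a c : ℕ) (n : ℕ) (f : ℕ → Bool) : Finset (ℕ × ℕ × ℕ) :=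
  ((Finset.Icc 1 n) ×ˢ (Finset.Icc 1 n) ×ˢ (Finset.Icc 1 n)).filter
    fun p => a * p.1 + a * p.2.1 = c * p.2.2 ∧
      f p.1 = false ∧ f p.2.1 = false ∧ f p.2.2 = false

/-- Let `a, c` be positive coprime integers. There are constants `C₁, C > 0` such that
for all sufficiently large `n` and every 2-coloring `f` of `[n]` (red is `true`,
blue is `false`): if the set `R'` of red multiples of `c` in `[n]` has size at most
`C₁·n`, then there are at least `C·n²` entirely blue solutions to `a·x + a·y = c·z`. -/
theorem few_red_multiples_many_blue (a c : ℕ) (ha : 0 < a) (hc : 0 < c)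
    (hcop : Nat.Coprime a c) :
    ∃ C₁ C : ℝ, 0 < C₁ ∧ 0 < C ∧ ∃ N : ℕ, ∀ n ≥ N, ∀ f : ℕ → Bool,
      ((((Finset.Icc 1 n).filter fun x => c ∣ x ∧ f x = true).card : ℝ) ≤ C₁ * n) →
      C * (n : ℝ) ^ 2 ≤ ((blueSolns a c n f).card : ℝ) := by
  have haR : (0:ℝ) < (a:ℝ) := by exact_mod_cast ha
  have hcR : (0:ℝ) < (c:ℝ) := by exact_mod_cast hc
  have h2c : (0:ℝ) < 2+(c:ℝ) := by linarith
  have hXpos : (0:ℝ) < 8*(a:ℝ)*c*(2+c) :=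
    mul_pos (mul_pos (mul_pos (by norm_num : (0:ℝ)<8) haR) hcR) h2c
  have h32 : (0:ℝ) < 32*(a:ℝ)^2*c^3 :=
    mul_pos (mul_pos (by norm_num : (0:ℝ)<32) (pow_pos haR 2)) (pow_pos hcR 3)
  have hC₁pos : (0:ℝ) < 1/(8*(a:ℝ)*c*(2+c)) := div_pos one_pos hXpos
  have hCpos : (0:ℝ) < 1/(32*(a:ℝ)^2*c^3) := div_pos one_pos h32
  refine ⟨1/(8*(a:ℝ)*c*(2+c)), 1/(32*(a:ℝ)^2*c^3), hC₁pos, hCpos, 8*a*c^2, ?_⟩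
  intro n hn f hR
  set R : Finset ℕ := (Finset.Icc 1 n).filter (fun x => c ∣ x ∧ f x = true) with hRdef
  set m : ℕ := n / (2*a*c^2) with hmdef
  have hk : 0 < 2*a*c^2 := by positivity
  have hm1 : 2 ≤ m := by
    rw [hmdef]
    apply (Nat.le_div_iff_mul_le hk).mpr
    calc 2*(2*a*c^2) = 4*(a*c^2) := by ring
      _ ≤ 8*(a*c^2) := Nat.mul_le_mul (by norm_num) (le_refl _)
      _ = 8*a*c^2 := by ring
      _ ≤ n := hn
  have hmn : 2*a*c^2*m ≤ n := by
    rw [hmdef, Nat.mul_comm]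
    exact Nat.div_mul_le_self n (2*a*c^2)
  have hnm : n ≤ 4*a*c^2*m := by
    have h1 := Nat.div_add_mod n (2*a*c^2)
    have h2 := Nat.mod_lt n hk
    have h3 : 2*a*c^2 ≤ 2*a*c^2*m := Nat.le_mul_of_pos_right _ (by omega)
    rw [← hmdef] at h1
    calc n = 2*a*c^2*m + n % (2*a*c^2) := h1.symm
      _ ≤ 2*a*c^2*m + 2*a*c^2 := by omega
      _ ≤ 2*a*c^2*m + 2*a*c^2*m := by omega
      _ = 4*a*c^2*m := by ring
  classical
  set Q : Finset (ℕ × ℕ) := (Finset.Icc (m+1) (2*m)) ×ˢ (Finset.Icc 1 (c*m)) with hQ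
  set G : Finset (ℕ × ℕ) := Q.filter (fun p => f (c*p.2) = false ∧
      f (c*(c*p.1 - p.2)) = false ∧ f (a*c*p.1) = false) with hG
  -- bounds for members of Q
  have hbnd : ∀ p : ℕ × ℕ, p ∈ Q →
      (1 ≤ c*p.2 ∧ c*p.2 ≤ n) ∧ (p.2 + c ≤ c*p.1) ∧
      (1 ≤ c*(c*p.1 - p.2) ∧ c*(c*p.1 - p.2) ≤ n) ∧ (1 ≤ a*c*p.1 ∧ a*c*p.1 ≤ n) := by
    rintro ⟨s, u⟩ hp
    dsimp only
    simp only [hQ, mem_product, mem_Icc] at hp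
    obtain ⟨⟨hs1, hs2⟩, hu1, hu2⟩ := hp
    have hcs1 : c*(m+1) ≤ c*s := Nat.mul_le_mul (le_refl c) hs1
    have hcs2 : c*s ≤ c*(2*m) := Nat.mul_le_mul (le_refl c) hs2
    have hsu : u + c ≤ c*s := by
      calc u + c ≤ c*m + c := Nat.add_le_add_right hu2 c
        _ = c*(m+1) := by ring
        _ ≤ c*s := hcs1
    refine ⟨⟨Nat.mul_pos hc (by omega), ?_⟩, hsu, ⟨Nat.mul_pos hc (by omega), ?_⟩, Nat.mul_pos (Nat.mul_pos ha hc) (by omega), ?_⟩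
    · calc c*u ≤ c*(c*m) := Nat.mul_le_mul (le_refl c) hu2
        _ = 1*(c*(c*m)) := by ring
        _ ≤ (2*a)*(c*(c*m)) := Nat.mul_le_mul (by omega) (le_refl _)
        _ = 2*a*c^2*m := by ring
        _ ≤ n := hmn
    · calc c*(c*s - u) ≤ c*(c*s) := Nat.mul_le_mul (le_refl c) (Nat.sub_le _ _)
        _ ≤ c*(c*(2*m)) := Nat.mul_le_mul (le_refl c) hcs2
        _ = 1*(c*(c*(2*m))) := by ring
        _ ≤ a*(c*(c*(2*m))) := Nat.mul_le_mul (by omega) (le_refl _)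
        _ = 2*a*c^2*m := by ring
        _ ≤ n := hmn
    · calc a*c*s ≤ a*c*(2*m) := Nat.mul_le_mul (le_refl _) hs2
        _ = 1*(a*(2*m))*c := by ring
        _ ≤ c*(a*(2*m))*c := Nat.mul_le_mul (Nat.mul_le_mul (by omega) (le_refl _)) (le_refl c)
        _ = 2*a*c^2*m := by ring
        _ ≤ n := hmn
  -- Step A: G injects into blueSolns
  have hA : G.card ≤ (blueSolns a c n f).card := by
    apply Finset.card_le_card_of_injOn (fun p => (c*p.2, c*(c*p.1 - p.2), a*c*p.1))
    · intro p hp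
      rw [mem_coe, hG, mem_filter] at hp; rw [mem_coe]
      obtain ⟨hpQ, h1, h2, h3⟩ := hp
      obtain ⟨⟨hx1, hx2⟩, hsu, ⟨hy1, hy2⟩, hz1, hz2⟩ := hbnd p hpQ
      simp only [blueSolns, mem_filter, mem_product, mem_Icc]
      refine ⟨⟨⟨hx1, hx2⟩, ⟨hy1, hy2⟩, hz1, hz2⟩, ?_, h1, h2, h3⟩
      have hle : p.2 ≤ c*p.1 := by omega
      obtain ⟨v, hv⟩ : ∃ v, c*p.1 - p.2 = v := ⟨_, rfl⟩
      have hv2 : v + p.2 = c*p.1 := by omega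
      rw [hv]
      calc a*(c*p.2) + a*(c*v) = a*c*(v + p.2) := by ring
        _ = a*c*(c*p.1) := by rw [hv2]
        _ = c*(a*c*p.1) := by ring
    · intro p hp q hq hpq
      simp only [Prod.mk.injEq] at hpq
      obtain ⟨h1, _, h3⟩ := hpq
      have hs : p.1 = q.1 := Nat.eq_of_mul_eq_mul_left (Nat.mul_pos ha hc) h3
      have hu : p.2 = q.2 := Nat.eq_of_mul_eq_mul_left hc h1
      exact Prod.ext hs hu
  -- Step B: Q is covered by G and three bad sets
  set B1 : Finset (ℕ × ℕ) := Q.filter (fun p => f (c*p.2) = true) with hB1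
  set B2 : Finset (ℕ × ℕ) := Q.filter (fun p => f (c*(c*p.1 - p.2)) = true) with hB2
  set B3 : Finset (ℕ × ℕ) := Q.filter (fun p => f (a*c*p.1) = true) with hB3
  have hcover : Q ⊆ G ∪ B1 ∪ B2 ∪ B3 := by
    intro p hp
    simp only [mem_union, hG, hB1, hB2, hB3, mem_filter]
    rcases hx : f (c*p.2) with _ | _
    · rcases hy : f (c*(c*p.1 - p.2)) with _ | _
      · rcases hz : f (a*c*p.1) with _ | _
        · exact Or.inl (Or.inl (Or.inl ⟨hp, rfl, rfl, rfl⟩))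
        · exact Or.inr ⟨hp, rfl⟩
      · exact Or.inl (Or.inr ⟨hp, rfl⟩)
    · exact Or.inl (Or.inl (Or.inr ⟨hp, rfl⟩))
  have hQle : Q.card ≤ G.card + B1.card + B2.card + B3.card := by
    calc Q.card ≤ (G ∪ B1 ∪ B2 ∪ B3).card := Finset.card_le_card hcover
      _ ≤ (G ∪ B1 ∪ B2).card + B3.card := Finset.card_union_le _ _
      _ ≤ (G ∪ B1).card + B2.card + B3.card := by
          have := Finset.card_union_le (G ∪ B1) B2; omega
      _ ≤ G.card + B1.card + B2.card + B3.card := by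
          have := Finset.card_union_le G B1; omega
  -- Step C: bad set bounds
  have hb1 : B1.card ≤ R.card * m := by
    have : B1.card ≤ (R ×ˢ Finset.Icc (m+1) (2*m)).card := by
      apply Finset.card_le_card_of_injOn (fun p => (c*p.2, p.1))
      · intro p hp
        rw [mem_coe, hB1, mem_filter] at hp; rw [mem_coe]
        obtain ⟨hpQ, hred⟩ := hp
        obtain ⟨⟨hx1, hx2⟩, _, _, _⟩ := hbnd p hpQ
        rw [hQ, mem_product] at hpQ
        simp only [mem_product, hRdef, mem_filter, mem_Icc]
        exact ⟨⟨⟨hx1, hx2⟩, ⟨p.2, by ring⟩, hred⟩, by simpa using hpQ.1⟩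
      · intro p hp q hq hpq
        simp only [Prod.mk.injEq] at hpq
        exact Prod.ext hpq.2 (Nat.eq_of_mul_eq_mul_left hc hpq.1)
    calc B1.card ≤ (R ×ˢ Finset.Icc (m+1) (2*m)).card := this
      _ = R.card * m := by rw [card_product, Nat.card_Icc]; congr 1; omega
  have hb2 : B2.card ≤ R.card * m := by
    have : B2.card ≤ (R ×ˢ Finset.Icc (m+1) (2*m)).card := by
      apply Finset.card_le_card_of_injOn (fun p => (c*(c*p.1 - p.2), p.1))
      · intro p hp
        rw [mem_coe, hB2, mem_filter] at hp; rw [mem_coe]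
        obtain ⟨hpQ, hred⟩ := hp
        obtain ⟨_, _, ⟨hy1, hy2⟩, _⟩ := hbnd p hpQ
        rw [hQ, mem_product] at hpQ
        simp only [mem_product, hRdef, mem_filter, mem_Icc]
        exact ⟨⟨⟨hy1, hy2⟩, ⟨c*p.1 - p.2, rfl⟩, hred⟩, by simpa using hpQ.1⟩
      · intro p hp q hq hpq
        simp only [Prod.mk.injEq] at hpq
        obtain ⟨h1, h2⟩ := hpq
        have hpQ : p ∈ Q := Finset.filter_subset _ _ (by rw [hB2] at hp; exact Finset.mem_coe.mp hp)
        have hqQ : q ∈ Q := Finset.filter_subset _ _ (by rw [hB2] at hq; exact Finset.mem_coe.mp hq)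
        obtain ⟨_, hsup, _, _⟩ := hbnd p hpQ
        obtain ⟨_, hsuq, _, _⟩ := hbnd q hqQ
        have h3 : c*p.1 - p.2 = c*q.1 - q.2 := Nat.eq_of_mul_eq_mul_left hc h1
        rw [h2] at hsup h3
        exact Prod.ext h2 (by omega)
    calc B2.card ≤ (R ×ˢ Finset.Icc (m+1) (2*m)).card := this
      _ = R.card * m := by rw [card_product, Nat.card_Icc]; congr 1; omega
  have hb3 : B3.card ≤ R.card * (c*m) := by
    have : B3.card ≤ (R ×ˢ Finset.Icc 1 (c*m)).card := by
      apply Finset.card_le_card_of_injOn (fun p => (a*c*p.1, p.2))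
      · intro p hp
        rw [mem_coe, hB3, mem_filter] at hp; rw [mem_coe]
        obtain ⟨hpQ, hred⟩ := hp
        obtain ⟨_, _, _, hz1, hz2⟩ := hbnd p hpQ
        rw [hQ, mem_product] at hpQ
        refine Finset.mem_product.mpr ⟨?_, hpQ.2⟩
        rw [hRdef, mem_filter]
        exact ⟨mem_Icc.mpr ⟨hz1, hz2⟩, ⟨a*p.1, by ring⟩, hred⟩
      · intro p hp q hq hpq
        simp only [Prod.mk.injEq] at hpq
        exact Prod.ext (Nat.eq_of_mul_eq_mul_left (Nat.mul_pos ha hc) hpq.1) hpq.2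
    calc B3.card ≤ (R ×ˢ Finset.Icc 1 (c*m)).card := this
      _ = R.card * (c*m) := by rw [card_product, Nat.card_Icc, Nat.add_sub_cancel]
  have hQcard : Q.card = m * (c*m) := by
    rw [hQ, card_product, Nat.card_Icc, Nat.card_Icc]
    congr 1 <;> omega
  -- Final real arithmetic
  have hcast : ((m:ℝ) * ((c:ℝ)*m)) ≤ (G.card : ℝ) + R.card*m + R.card*m + R.card*((c:ℝ)*m) := by
    have := hQle
    rw [hQcard] at this
    have h1 : (m * (c*m) : ℝ) ≤ ((G.card + R.card*m + R.card*m + R.card*(c*m) : ℕ) : ℝ) := by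
      exact_mod_cast le_trans this (by omega)
    push_cast at h1
    linarith
  have hM0 : (0:ℝ) ≤ (m:ℝ) := Nat.cast_nonneg m
  have hN0 : (0:ℝ) ≤ (n:ℝ) := Nat.cast_nonneg n
  have hR0 : (0:ℝ) ≤ (R.card:ℝ) := Nat.cast_nonneg _
  have hnmR : (n:ℝ) ≤ 4*(a:ℝ)*c^2*m := by exact_mod_cast hnm
  have h3' : (R.card:ℝ) * (8*(a:ℝ)*c*(2+c)) ≤ n := by
    have := hR
    rw [one_div] at this
    calc (R.card:ℝ) * (8*(a:ℝ)*c*(2+c)) ≤ ((8*(a:ℝ)*c*(2+c))⁻¹ * n) * (8*(a:ℝ)*c*(2+c)) :=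
          mul_le_mul_of_nonneg_right this (le_of_lt hXpos)
      _ = n := by field_simp
  have hGcB : (G.card : ℝ) ≤ ((blueSolns a c n f).card : ℝ) := by exact_mod_cast hA
  -- key: blue ≥ c*m^2/2
  have hint1 : (R.card:ℝ) * (8*(a:ℝ)*c*(2+c)) * m ≤ (n:ℝ) * m :=
    mul_le_mul_of_nonneg_right h3' hM0
  have hint2 : (n:ℝ) * m ≤ (4*(a:ℝ)*c^2*m) * m := mul_le_mul_of_nonneg_right hnmR hM0
  have h8 : (0:ℝ) < 8*(a:ℝ)*c := mul_pos (mul_pos (by norm_num : (0:ℝ)<8) haR) hcR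
  have hXfact : (8*(a:ℝ)*c) * ((R.card:ℝ) * m * (2+(c:ℝ))) ≤ (8*(a:ℝ)*c) * ((c:ℝ)*m^2/2) := by
    linarith [hint1, hint2]
  have hXle : (R.card:ℝ) * m * (2+(c:ℝ)) ≤ (c:ℝ)*m^2/2 :=
    le_of_mul_le_mul_left hXfact h8
  have hblue : (c:ℝ)*m^2/2 ≤ ((blueSolns a c n f).card : ℝ) := by
    linarith [hcast, hGcB, hXle]
  -- conclude
  rw [one_div]
  rw [inv_mul_eq_div, div_le_iff₀ h32]
  have hint3 : (n:ℝ)*n ≤ (4*(a:ℝ)*c^2*m)*(4*(a:ℝ)*c^2*m) :=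
    mul_le_mul hnmR hnmR hN0 (by positivity)
  have hfinal := mul_le_mul_of_nonneg_right hblue (le_of_lt h32)
  linarith [hint3, hfinal]
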